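/- Let n ≥ 7 be an odd integer not divisible by 5. Set B₁ = B(2/5 − 1/(2n), 1/n) and B₂ = B(3/5 − 1/(2n), 1/n), where B(a,b) = Γ(a)Γ(b)/Γ(a+b) is the Euler Beta function. Then, in ℂ, | (−1 + e^{i(4π/5 − π/n)})·B₁ + (−1 + e^{i(6π/5 − π/n)})·B₂ | = ( (cos(π/n) + cos(π/5)) / cos(π/(2n)) )·( B₁ + B₂ ). -/

import Mathlib

open Real

noncomputable section

/-- The Euler Beta function `B(a,b) = Γ(a)Γ(b)/Γ(a+b)`. -/
def eulerBeta (a b : ℝ) : ℝ := Real.Gamma a * Real.Gamma b / Real.Gamma (a + b)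

set_option maxHeartbeats 1000000 in
/-- For `n ≥ 7` odd, `5 ∤ n`, with `B₁ = B(2/5 − 1/2n, 1/n)` and `B₂ = B(3/5 − 1/2n, 1/n)`:
`|(−1 + ζ₅²ζ₂ₙ⁻¹)·B₁ + (−1 + ζ₅³ζ₂ₙ⁻¹)·B₂| = ((cos(π/n) + cos(π/5))/cos(π/2n))·(B₁ + B₂)`,
where `ζ₅²ζ₂ₙ⁻¹ = e^{i(4π/5 − π/n)}` and `ζ₅³ζ₂ₙ⁻¹ = e^{i(6π/5 − π/n)}`. -/
theorem beta_values_side_length_ratio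
    (n : ℕ) (hn : 7 ≤ n) (hodd : Odd n) (h5 : ¬ (5 ∣ n))
    (B₁ B₂ : ℝ)
    (hB₁ : B₁ = eulerBeta (2 / 5 - 1 / (2 * n)) (1 / n))
    (hB₂ : B₂ = eulerBeta (3 / 5 - 1 / (2 * n)) (1 / n)) :
    ‖((-1 + Complex.exp (Complex.I * ((4 * π / 5 - π / n : ℝ) : ℂ))) * (B₁ : ℂ)
          + (-1 + Complex.exp (Complex.I * ((6 * π / 5 - π / n : ℝ) : ℂ))) * (B₂ : ℂ))‖
      = ((Real.cos (π / n) + Real.cos (π / 5)) / Real.cos (π / (2 * n))) * (B₁ + B₂) := by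

  have hπ : 0 < π := Real.pi_pos
  have hN7 : (7:ℝ) ≤ (n:ℝ) := by exact_mod_cast hn
  have hN0 : (0:ℝ) < (n:ℝ) := by linarith
  have hn0 : (n:ℝ) ≠ 0 := ne_of_gt hN0
  set α : ℝ := 2*π/5 with hα
  set β : ℝ := π/(2*(n:ℝ)) with hβ
  have hβ0 : 0 < β := by positivity
  have hβle : β ≤ π/14 := by
    rw [hβ]; exact div_le_div_of_nonneg_left hπ.le (by norm_num) (by linarith)
  -- basic trig positivity
  have hsA : 0 < Real.sin α := Real.sin_pos_of_pos_of_lt_pi (by rw [hα]; linarith) (by rw [hα]; linarith)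
  have hsm : 0 < Real.sin (α - β) :=
    Real.sin_pos_of_pos_of_lt_pi (by rw [hα]; linarith) (by rw [hα]; linarith)
  have hsp : 0 < Real.sin (α + β) :=
    Real.sin_pos_of_pos_of_lt_pi (by rw [hα]; linarith) (by rw [hα]; linarith)
  have hcb : 0 < Real.cos β :=
    Real.cos_pos_of_mem_Ioo ⟨by linarith, by linarith⟩
  -- arguments of Gamma
  have hinv : 1/(2*(n:ℝ)) ≤ 1/14 := by
    apply div_le_div_of_nonneg_left (by norm_num) (by norm_num) (by linarith)
  have hinv0 : 0 < 1/(2*(n:ℝ)) := by positivity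
  have h1n : 0 < 1/(n:ℝ) := by positivity
  set x : ℝ := 2/5 - 1/(2*(n:ℝ)) with hxdef
  set y : ℝ := 2/5 + 1/(2*(n:ℝ)) with hydef
  have hx0 : 0 < x := by rw [hxdef]; linarith
  have hy0 : 0 < y := by rw [hydef]; linarith
  have hx1 : x < 1 := by rw [hxdef]; linarith
  have hy1 : y < 1 := by rw [hydef]; linarith
  have h2t : 1/(n:ℝ) = 2*(1/(2*(n:ℝ))) := by field_simp
  -- Beta as Gamma quotients
  have e1 : B₁ = Real.Gamma x * Real.Gamma (1/(n:ℝ)) / Real.Gamma y := by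
    have hxy : x + 1/(n:ℝ) = y := by rw [hxdef, hydef, h2t]; ring
    rw [hB₁, eulerBeta, hxy]
  have e2 : B₂ = Real.Gamma (1-y) * Real.Gamma (1/(n:ℝ)) / Real.Gamma (1-x) := by
    have ha : (3:ℝ)/5 - 1/(2*(n:ℝ)) = 1 - y := by rw [hydef]; ring
    have hb : 1 - y + 1/(n:ℝ) = 1 - x := by rw [hxdef, hydef, h2t]; ring
    rw [hB₂, eulerBeta, ha, hb]
  have hπx : π * x = α - β := by rw [hxdef, hα, hβ]; ring
  have hπy : π * y = α + β := by rw [hydef, hα, hβ]; ring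
  -- reflection
  have r1 := Real.Gamma_mul_Gamma_one_sub x
  have r2 := Real.Gamma_mul_Gamma_one_sub y
  rw [hπx] at r1
  rw [hπy] at r2
  have hGy : Real.Gamma y ≠ 0 := ne_of_gt (Real.Gamma_pos_of_pos hy0)
  have hG1x : Real.Gamma (1-x) ≠ 0 := ne_of_gt (Real.Gamma_pos_of_pos (by linarith))
  have f1 : Real.sin (α - β) * (Real.Gamma x * Real.Gamma (1-x)) = π := by
    rw [r1]; field_simp
  have f2 : Real.sin (α + β) * (Real.Gamma y * Real.Gamma (1-y)) = π := by
    rw [r2]; field_simp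
  -- the key relation
  have key : Real.sin (α - β) * B₁ = Real.sin (α + β) * B₂ := by
    rw [e1, e2]
    field_simp
    linear_combination f1 - f2
  set s : ℝ := Real.sin (α - β) * B₁ with hsdef
  have hs1 : Real.sin (α - β) * B₁ = s := hsdef.symm
  have hs2 : Real.sin (α + β) * B₂ = s := key.symm
  have hB1pos : 0 < B₁ := by
    rw [e1]
    exact div_pos (mul_pos (Real.Gamma_pos_of_pos hx0) (Real.Gamma_pos_of_pos h1n))
      (Real.Gamma_pos_of_pos hy0)
  have hspos : 0 < s := by rw [hsdef]; exact mul_pos hsm hB1pos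
  have hsum : Real.sin (α - β) + Real.sin (α + β) = 2*Real.sin α*Real.cos β := by
    rw [Real.sin_add, Real.sin_sub]; ring
  have hdiff : Real.cos (α - β) - Real.cos (α + β) = 2*Real.sin α*Real.sin β := by
    rw [Real.cos_add, Real.cos_sub]; ring
  have ht1 : 4*π/5 - π/(n:ℝ) = 2*(α-β) := by rw [hα, hβ]; field_simp; ring
  have ht2 : 6*π/5 - π/(n:ℝ) = 2*π - 2*(α+β) := by rw [hα, hβ]; field_simp; ring
  have pm := Real.sin_sq_add_cos_sq (α-β)
  have pp := Real.sin_sq_add_cos_sq (α+β)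
  have hRe : (Real.cos (4*π/5 - π/(n:ℝ)) - 1)*B₁ + (Real.cos (6*π/5 - π/(n:ℝ)) - 1)*B₂
      = -(4*s*Real.sin α)*Real.cos β := by
    rw [ht1, ht2, show Real.cos (2*π - 2*(α+β)) = Real.cos (2*(α+β)) by rw [Real.cos_sub]; simp,
      Real.cos_two_mul', Real.cos_two_mul']
    linear_combination (-2*Real.sin (α-β))*hs1 + (-2*Real.sin (α+β))*hs2 + (-2*s)*hsum
      + B₁*pm + B₂*pp
  have hIm : Real.sin (4*π/5 - π/(n:ℝ))*B₁ + Real.sin (6*π/5 - π/(n:ℝ))*B₂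
      = -(-(4*s*Real.sin α)*Real.sin β) := by
    rw [ht1, ht2, show Real.sin (2*π - 2*(α+β)) = -Real.sin (2*(α+β)) by rw [Real.sin_sub]; simp,
      Real.sin_two_mul, Real.sin_two_mul]
    linear_combination (2*Real.cos (α-β))*hs1 + (-2*Real.cos (α+β))*hs2 + (2*s)*hdiff
  have hE : ∀ θ:ℝ, Complex.exp (Complex.I * (θ:ℂ)) = (Real.cos θ : ℂ) + (Real.sin θ : ℂ)*Complex.I := by
    intro θ
    rw [mul_comm, Complex.exp_mul_I, ← Complex.ofReal_cos, ← Complex.ofReal_sin]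
  have hz : (-1 + Complex.exp (Complex.I * ((4 * π / 5 - π / n : ℝ) : ℂ))) * (B₁ : ℂ)
          + (-1 + Complex.exp (Complex.I * ((6 * π / 5 - π / n : ℝ) : ℂ))) * (B₂ : ℂ)
      = ((-(4*s*Real.sin α) : ℝ) : ℂ) * Complex.exp (Complex.I * ((-β : ℝ) : ℂ)) := by
    rw [hE, hE, hE]
    apply Complex.ext <;>
      simp only [Complex.add_re, Complex.add_im, Complex.mul_re, Complex.mul_im,
        Complex.ofReal_re, Complex.ofReal_im, Complex.I_re, Complex.I_im,
        Complex.neg_re, Complex.neg_im, Complex.one_re, Complex.one_im,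
        Real.cos_neg, Real.sin_neg]
    · linear_combination hRe
    · linear_combination hIm
  rw [hz, norm_mul, Complex.norm_real, Real.norm_eq_abs,
    show ‖Complex.exp (Complex.I * ((-β:ℝ):ℂ))‖ = 1 by
      rw [mul_comm]; exact Complex.norm_exp_ofReal_mul_I _,
    mul_one, abs_of_nonpos (neg_nonpos.mpr (mul_nonneg (mul_nonneg (by norm_num) hspos.le) hsA.le)), neg_neg]
  have hcn : Real.cos (π/(n:ℝ)) = Real.cos (2*β) := by rw [hβ]; congr 1; field_simp
  have hc5 : Real.cos (π/5) = -Real.cos (2*α) := by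
    rw [show 2*α = π - π/5 by rw [hα]; ring, Real.cos_pi_sub, neg_neg]
  have hprod : Real.cos (2*β) - Real.cos (2*α) = 2*Real.sin (α+β)*Real.sin (α-β) := by
    rw [Real.cos_two_mul', Real.cos_two_mul', Real.sin_add, Real.sin_sub]
    linear_combination (1-2*Real.cos β^2)*(Real.sin_sq_add_cos_sq α)
      + (2*Real.cos α^2-1)*(Real.sin_sq_add_cos_sq β)
  rw [hcn, hc5]
  rw [div_mul_eq_mul_div, eq_div_iff (ne_of_gt hcb)]
  linear_combination (-(B₁+B₂))*hprod + (-2*Real.sin (α+β))*hs1 + (-2*Real.sin (α-β))*hs2 + (-2*s)*hsum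


end
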